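/- arXiv:1811.00458 — 2 statements merged into one kernel-verified Lean document; each statement's English description precedes it below -/
import Mathlib

section
/- The optimal discriminator maximizing L(D) = (1/2)·E_{x∼P}[log D(x)] + (1/2)·E_{x∼Q}[log(1 − D(x))] over measurable functions D: X → (0,1) is D*(x) = p(x)/(p(x) + q(x)) almost everywhere (on the set where p(x)+q(x) > 0). -/
lemma aux_key (a b d : ℝ) (ha : 0 ≤ a) (hb : 0 ≤ b) (hd0 : 0 < d) (hd1 : d < 1) :
    a * Real.log d + b * Real.log (1 - d)
      ≤ a * Real.log (a / (a + b)) + b * Real.log (1 - a / (a + b)) ∧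
    (a * Real.log d + b * Real.log (1 - d)
      = a * Real.log (a / (a + b)) + b * Real.log (1 - a / (a + b)) →
      0 < a + b → d = a / (a + b)) := by
  rcases eq_or_lt_of_le (by linarith : (0:ℝ) ≤ a + b) with hab | hab
  · have ha0 : a = 0 := by linarith
    have hb0 : b = 0 := by linarith
    simp [ha0, hb0]
  · have h1mb : 1 - a / (a + b) = b / (a + b) := by field_simp; ring
    rcases eq_or_lt_of_le ha with ha0 | ha0
    · have hbpos : 0 < b := by linarith
      have hrhs : a * Real.log (a / (a + b)) + b * Real.log (1 - a / (a + b)) = 0 := by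
        rw [← ha0]; simp
      have hlt : b * Real.log (1 - d) < 0 := by
        apply mul_neg_of_pos_of_neg hbpos
        exact Real.log_neg (by linarith) (by linarith)
      constructor
      · rw [hrhs, ← ha0]; simpa using hlt.le
      · intro heq _; rw [hrhs, ← ha0, zero_mul, zero_add] at heq; linarith
    · rcases eq_or_lt_of_le hb with hb0 | hb0
      · have hrhs : a * Real.log (a / (a + b)) + b * Real.log (1 - a / (a + b)) = 0 := by
          rw [← hb0]; simp [div_self (by linarith : a ≠ 0)]
        have hlt : a * Real.log d < 0 := mul_neg_of_pos_of_neg ha0 (Real.log_neg hd0 hd1)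
        constructor
        · rw [hrhs, ← hb0]; simpa using hlt.le
        · intro heq _; rw [hrhs, ← hb0, zero_mul, add_zero] at heq; linarith
      · -- main case: a > 0, b > 0
        set x := d * (a + b) / a with hx
        set y := (1 - d) * (a + b) / b with hy
        have hxpos : 0 < x := by positivity
        have hypos : 0 < y := by
          apply div_pos (mul_pos (by linarith) hab) hb0
        have hlogx : Real.log d - Real.log (a / (a + b)) = Real.log x := by
          rw [hx, ← Real.log_div (ne_of_gt hd0) (ne_of_gt (div_pos ha0 hab))]
          congr 1; field_simp
        have hlogy : Real.log (1 - d) - Real.log (1 - a / (a + b)) = Real.log y := by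
          rw [h1mb, hy, ← Real.log_div (by linarith) (ne_of_gt (div_pos hb0 hab))]
          congr 1; field_simp
        have h1 : Real.log x ≤ x - 1 := Real.log_le_sub_one_of_pos hxpos
        have h2 : Real.log y ≤ y - 1 := Real.log_le_sub_one_of_pos hypos
        have hsum : a * (x - 1) + b * (y - 1) = 0 := by
          rw [hx, hy]; field_simp; ring
        have hle : a * Real.log d + b * Real.log (1 - d)
            ≤ a * Real.log (a / (a + b)) + b * Real.log (1 - a / (a + b)) := by
          nlinarith [mul_le_mul_of_nonneg_left h1 ha, mul_le_mul_of_nonneg_left h2 hb,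
            hlogx, hlogy]
        refine ⟨hle, fun heq _ => ?_⟩
        by_contra hne
        have hx1 : x ≠ 1 := by
          intro hx1
          apply hne
          have : d * (a + b) = a := (div_eq_one_iff_eq (ne_of_gt ha0)).mp hx1
          rw [eq_div_iff (ne_of_gt hab)]; linarith
        have h1' : Real.log x < x - 1 := Real.log_lt_sub_one_of_pos hxpos hx1
        nlinarith [mul_lt_mul_of_pos_left h1' ha0, mul_le_mul_of_nonneg_left h2 hb,
          hlogx, hlogy]

open MeasureTheory

/-- The optimal discriminator for the objective
`(1/2) E_P[log D] + (1/2) E_Q[log (1 - D)]` is `D*(x) = p(x) / (p(x) + q(x))`,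
almost everywhere on the set where `p(x) + q(x) > 0`. -/
theorem stmt3 {X : Type*} [MeasurableSpace X] (μ : Measure X)
    (p q : X → ℝ) (hp : ∀ x, 0 ≤ p x) (hq : ∀ x, 0 ≤ q x)
    (hpm : Measurable p) (hqm : Measurable q)
    (hp1 : ∫ x, p x ∂μ = 1) (hq1 : ∫ x, q x ∂μ = 1)
    (Dstar : X → ℝ) (hD : ∀ x, Dstar x = p x / (p x + q x))
    (hint1 : Integrable (fun x => p x * Real.log (Dstar x)) μ)
    (hint2 : Integrable (fun x => q x * Real.log (1 - Dstar x)) μ) :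
    ∀ D : X → ℝ, Measurable D → (∀ x, D x ∈ Set.Ioo (0 : ℝ) 1) →
      Integrable (fun x => p x * Real.log (D x)) μ →
      Integrable (fun x => q x * Real.log (1 - D x)) μ →
      ((1/2) * ∫ x, p x * Real.log (D x) ∂μ + (1/2) * ∫ x, q x * Real.log (1 - D x) ∂μ
          ≤ (1/2) * ∫ x, p x * Real.log (Dstar x) ∂μ
            + (1/2) * ∫ x, q x * Real.log (1 - Dstar x) ∂μ) ∧
      ((1/2) * ∫ x, p x * Real.log (D x) ∂μ + (1/2) * ∫ x, q x * Real.log (1 - D x) ∂μ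
          = (1/2) * ∫ x, p x * Real.log (Dstar x) ∂μ
            + (1/2) * ∫ x, q x * Real.log (1 - Dstar x) ∂μ →
        ∀ᵐ x ∂μ, 0 < p x + q x → D x = Dstar x) := by
  intro D hDm hDmem hintD1 hintD2
  set f : X → ℝ := fun x => p x * Real.log (D x) + q x * Real.log (1 - D x) with hf
  set g : X → ℝ := fun x => p x * Real.log (Dstar x) + q x * Real.log (1 - Dstar x) with hg
  have hptle : ∀ x, f x ≤ g x := by
    intro x
    simp only [hf, hg, hD x]
    exact (aux_key (p x) (q x) (D x) (hp x) (hq x) (hDmem x).1 (hDmem x).2).1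
  have hfint : Integrable f μ := hintD1.add hintD2
  have hgint : Integrable g μ := hint1.add hint2
  have hIle : ∫ x, f x ∂μ ≤ ∫ x, g x ∂μ := integral_mono hfint hgint hptle
  have hA : ∫ x, f x ∂μ
      = (∫ x, p x * Real.log (D x) ∂μ) + ∫ x, q x * Real.log (1 - D x) ∂μ :=
    integral_add hintD1 hintD2
  have hB : ∫ x, g x ∂μ
      = (∫ x, p x * Real.log (Dstar x) ∂μ) + ∫ x, q x * Real.log (1 - Dstar x) ∂μ :=
    integral_add hint1 hint2
  refine ⟨by linarith, ?_⟩
  intro heq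
  have hIeq : ∫ x, f x ∂μ = ∫ x, g x ∂μ := by linarith
  have hsub : ∫ x, (g x - f x) ∂μ = 0 := by
    rw [integral_sub hgint hfint, hIeq, sub_self]
  have hnn : 0 ≤ fun x => g x - f x := fun x => sub_nonneg.mpr (hptle x)
  have hae : (fun x => g x - f x) =ᵐ[μ] 0 :=
    (integral_eq_zero_iff_of_nonneg hnn (hgint.sub hfint)).mp hsub
  filter_upwards [hae] with x hx hx2
  have hfg : f x = g x := by
    have : g x - f x = 0 := hx
    linarith
  rw [hD x]
  refine (aux_key (p x) (q x) (D x) (hp x) (hq x) (hDmem x).1 (hDmem x).2).2 ?_ hx2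
  simpa only [hf, hg, hD x] using hfg
end

section
/- For probability distributions P, Q on X with densities p, q and any measurable D: X → (0,1), the objective (1/2)E_P[log D] + (1/2)E_Q[log(1−D)] is bounded above by its value at D* = p/(p+q), which equals (1/2)·(JSD(P‖Q)·2 − 2·log 2)/1, i.e., JSD(P‖Q) − log 2, where JSD is the Jensen–Shannon divergence. -/
open MeasureTheory

lemma key_ineq (a b t : ℝ) (ha : 0 ≤ a) (hb : 0 ≤ b) (ht0 : 0 < t) (ht1 : t < 1) :
    a * Real.log t + b * Real.log (1 - t) ≤
      a * Real.log (a / (a + b)) + b * Real.log (b / (a + b)) := by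
  rcases eq_or_lt_of_le ha with ha0 | ha0
  · rcases eq_or_lt_of_le hb with hb0 | hb0
    · simp [← ha0, ← hb0]
    · simp only [← ha0, zero_mul, zero_add, zero_add]
      rw [div_self (ne_of_gt hb0), Real.log_one, mul_zero]
      exact mul_nonpos_of_nonneg_of_nonpos hb (Real.log_nonpos (by linarith) (by linarith))
  · rcases eq_or_lt_of_le hb with hb0 | hb0
    · simp only [← hb0, zero_mul, add_zero, add_zero]
      rw [div_self (ne_of_gt ha0), Real.log_one, mul_zero]
      exact mul_nonpos_of_nonneg_of_nonpos ha (Real.log_nonpos (by linarith) (le_of_lt ht1))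
    · have hs : 0 < a + b := by linarith
      have h1 : Real.log t - Real.log (a / (a + b)) ≤ t * (a + b) / a - 1 := by
        rw [← Real.log_div (ne_of_gt ht0) (ne_of_gt (div_pos ha0 hs))]
        have : t / (a / (a + b)) = t * (a + b) / a := by field_simp
        rw [this]
        exact Real.log_le_sub_one_of_pos (by positivity)
      have h2 : Real.log (1 - t) - Real.log (b / (a + b)) ≤ (1 - t) * (a + b) / b - 1 := by
        rw [← Real.log_div (by linarith) (ne_of_gt (div_pos hb0 hs))]
        have : (1 - t) / (b / (a + b)) = (1 - t) * (a + b) / b := by field_simp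
        rw [this]
        exact Real.log_le_sub_one_of_pos (div_pos (mul_pos (by linarith) hs) hb0)
      have h1' : a * (Real.log t - Real.log (a / (a + b))) ≤ t * (a + b) - a := by
        have := mul_le_mul_of_nonneg_left h1 (le_of_lt ha0)
        calc a * (Real.log t - Real.log (a / (a + b))) ≤ a * (t * (a + b) / a - 1) := this
          _ = t * (a + b) - a := by field_simp
      have h2' : b * (Real.log (1 - t) - Real.log (b / (a + b))) ≤ (1 - t) * (a + b) - b := by
        have := mul_le_mul_of_nonneg_left h2 (le_of_lt hb0)
        calc b * (Real.log (1 - t) - Real.log (b / (a + b))) ≤ b * ((1 - t) * (a + b) / b - 1) := this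
          _ = (1 - t) * (a + b) - b := by field_simp
      nlinarith [h1', h2']

/-- The GAN discriminator objective `(1/2) E_P[log D] + (1/2) E_Q[log(1-D)]`. -/
noncomputable def ganObjective {X : Type*} [MeasurableSpace X] (μ : Measure X)
    (p q D : X → ℝ) : ℝ :=
  (1 / 2) * ∫ x, p x * Real.log (D x) ∂μ + (1 / 2) * ∫ x, q x * Real.log (1 - D x) ∂μ

/-- The Jensen–Shannon divergence `JSD(P‖Q) = (1/2) KL(P‖M) + (1/2) KL(Q‖M)` with
`M = (P+Q)/2`, expressed via the densities `p, q` w.r.t. a common dominating measure. -/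
noncomputable def jsDiv {X : Type*} [MeasurableSpace X] (μ : Measure X)
    (p q : X → ℝ) : ℝ :=
  (1 / 2) * ∫ x, p x * Real.log (p x / ((p x + q x) / 2)) ∂μ
    + (1 / 2) * ∫ x, q x * Real.log (q x / ((p x + q x) / 2)) ∂μ

/-- The objective is bounded above by its value at `D* = p/(p+q)`, which equals
`JSD(P‖Q) - log 2`. -/
theorem stmt12 {X : Type*} [MeasurableSpace X] (μ : Measure X)
    (p q : X → ℝ) (hp : ∀ x, 0 ≤ p x) (hq : ∀ x, 0 ≤ q x)
    (hpm : Measurable p) (hqm : Measurable q)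
    (hp1 : ∫ x, p x ∂μ = 1) (hq1 : ∫ x, q x ∂μ = 1)
    (hint1 : Integrable (fun x => p x * Real.log (p x / (p x + q x))) μ)
    (hint2 : Integrable (fun x => q x * Real.log (q x / (p x + q x))) μ)
    (hint3 : Integrable (fun x => p x * Real.log (p x / ((p x + q x) / 2))) μ)
    (hint4 : Integrable (fun x => q x * Real.log (q x / ((p x + q x) / 2))) μ) :
    (∀ D : X → ℝ, Measurable D → (∀ x, D x ∈ Set.Ioo (0 : ℝ) 1) →
        Integrable (fun x => p x * Real.log (D x)) μ →
        Integrable (fun x => q x * Real.log (1 - D x)) μ →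
        ganObjective μ p q D ≤ jsDiv μ p q - Real.log 2) ∧
      ganObjective μ p q (fun x => p x / (p x + q x)) = jsDiv μ p q - Real.log 2 := by
  have hpI : Integrable p μ := by
    by_contra h; rw [integral_undef h] at hp1; norm_num at hp1
  have hqI : Integrable q μ := by
    by_contra h; rw [integral_undef h] at hq1; norm_num at hq1
  have hA3 : ∫ x, p x * Real.log (p x / ((p x + q x) / 2)) ∂μ
      = (∫ x, p x * Real.log (p x / (p x + q x)) ∂μ) + Real.log 2 := by
    have heq : ∀ x, p x * Real.log (p x / ((p x + q x) / 2))
        = p x * Real.log (p x / (p x + q x)) + Real.log 2 * p x := by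
      intro x
      rcases eq_or_lt_of_le (hp x) with h0 | h0
      · simp [← h0]
      · have hs : 0 < p x + q x := by have := hq x; linarith
        have h2 : p x / ((p x + q x) / 2) = (p x / (p x + q x)) * 2 := by
          field_simp
        rw [h2, Real.log_mul (by positivity) two_ne_zero]; ring
    calc ∫ x, p x * Real.log (p x / ((p x + q x) / 2)) ∂μ
        = ∫ x, (p x * Real.log (p x / (p x + q x)) + Real.log 2 * p x) ∂μ := by
          exact integral_congr_ae (Filter.Eventually.of_forall heq)
      _ = (∫ x, p x * Real.log (p x / (p x + q x)) ∂μ) + Real.log 2 * ∫ x, p x ∂μ := by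
          rw [integral_add hint1 (hpI.const_mul _), integral_const_mul]
      _ = (∫ x, p x * Real.log (p x / (p x + q x)) ∂μ) + Real.log 2 := by
          rw [hp1, mul_one]
  have hB3 : ∫ x, q x * Real.log (q x / ((p x + q x) / 2)) ∂μ
      = (∫ x, q x * Real.log (q x / (p x + q x)) ∂μ) + Real.log 2 := by
    have heq : ∀ x, q x * Real.log (q x / ((p x + q x) / 2))
        = q x * Real.log (q x / (p x + q x)) + Real.log 2 * q x := by
      intro x
      rcases eq_or_lt_of_le (hq x) with h0 | h0
      · simp [← h0]
      · have hs : 0 < p x + q x := by have := hp x; linarith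
        have h2 : q x / ((p x + q x) / 2) = (q x / (p x + q x)) * 2 := by
          field_simp
        rw [h2, Real.log_mul (by positivity) two_ne_zero]; ring
    calc ∫ x, q x * Real.log (q x / ((p x + q x) / 2)) ∂μ
        = ∫ x, (q x * Real.log (q x / (p x + q x)) + Real.log 2 * q x) ∂μ := by
          exact integral_congr_ae (Filter.Eventually.of_forall heq)
      _ = (∫ x, q x * Real.log (q x / (p x + q x)) ∂μ) + Real.log 2 * ∫ x, q x ∂μ := by
          rw [integral_add hint2 (hqI.const_mul _), integral_const_mul]
      _ = (∫ x, q x * Real.log (q x / (p x + q x)) ∂μ) + Real.log 2 := by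
          rw [hq1, mul_one]
  have hjs : jsDiv μ p q - Real.log 2
      = (1 / 2) * (∫ x, p x * Real.log (p x / (p x + q x)) ∂μ)
        + (1 / 2) * (∫ x, q x * Real.log (q x / (p x + q x)) ∂μ) := by
    unfold jsDiv; rw [hA3, hB3]; ring
  constructor
  · intro D hD hDmem hI1 hI2
    rw [hjs]
    unfold ganObjective
    have hsum : ∫ x, (p x * Real.log (D x) + q x * Real.log (1 - D x)) ∂μ
        ≤ ∫ x, (p x * Real.log (p x / (p x + q x)) + q x * Real.log (q x / (p x + q x))) ∂μ :=
      integral_mono (hI1.add hI2) (hint1.add hint2)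
        (fun x => key_ineq _ _ _ (hp x) (hq x) (hDmem x).1 (hDmem x).2)
    rw [integral_add hI1 hI2, integral_add hint1 hint2] at hsum
    linarith
  · rw [hjs]
    unfold ganObjective
    have e2 : ∫ x, q x * Real.log (1 - p x / (p x + q x)) ∂μ
        = ∫ x, q x * Real.log (q x / (p x + q x)) ∂μ := by
      refine integral_congr_ae (Filter.Eventually.of_forall fun x => ?_)
      by_cases hs : p x + q x = 0
      · have hq0 : q x = 0 := by have := hp x; have := hq x; linarith
        simp [hq0]
      · have : 1 - p x / (p x + q x) = q x / (p x + q x) := by field_simp; ring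
        simp only [this]
    rw [e2]
end
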